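/- Fix integers n ≥ 2 and 1 ≤ d < n. Let 1 ≤ i ≤ d and V = Λ^i ℝ^{d+1}. For every 0 < θ < i there exists C_θ > 0 such that for every t > 0 and every v ∈ V \ {0}: ∫_{I^d} ‖c_t u(s) v‖^{−θ} ds ≤ C_θ · e^{−((d+1−i)/(d+1))·θ·t} · ‖v‖^{−θ}. -/

import Mathlib

open Matrix MeasureTheory Filter
open scoped ENNReal NNReal

noncomputable section

/-! ## Exterior powers in coordinates -/

/-- Index set for the standard wedge basis of Λ^k ℝ^m : k-element subsets of {0,…,m−1}. -/
abbrev Idx (m k : ℕ) := {J : Finset (Fin m) // J.card = k}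

/-- Model for the k-th exterior power of ℝ^m, with its sup norm w.r.t. the wedge basis. -/
abbrev Lam (m k : ℕ) := Idx m k → ℝ

/-- Increasing enumeration of a k-element subset of Fin m. -/
def finsetEmb {m k : ℕ} (J : Idx m k) : Fin k → Fin m := fun a => (J.1.orderIsoOfFin J.2 a : Fin m)

/-- Action of an m×m matrix on the k-th exterior power, in the standard wedge basis
(given by the k×k minors). -/
def extPow {m k : ℕ} (g : Matrix (Fin m) (Fin m) ℝ) (v : Lam m k) : Lam m k :=
  fun J => ∑ K : Idx m k, (g.submatrix (finsetEmb J) (finsetEmb K)).det * v K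

/-- The wedge product v₁ ∧ ⋯ ∧ v_k of k vectors in ℝ^m, in coordinates. -/
def wedge {m k : ℕ} (vs : Fin k → (Fin m → ℝ)) : Lam m k :=
  fun J => (Matrix.of fun a b : Fin k => vs b (finsetEmb J a)).det

/-- The wedge product of k integer vectors. -/
def wedgeInt {m k : ℕ} (vs : Fin k → (Fin m → ℤ)) : Lam m k :=
  wedge (fun j i => (vs j i : ℝ))

/-- The projection π_i of Λ^k ℝ^m onto the span of the wedges e_J having exactly i factors
among e_0,…,e_d (zero if i is out of range). -/
def proj (d : ℕ) {m k : ℕ} (i : ℕ) (v : Lam m k) : Lam m k :=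
  fun J => if (J.1.filter (fun x : Fin m => (x : ℕ) ≤ d)).card = i then v J else 0

/-- The projection π₊ of Λ^k ℝ^{d+1} onto the span of the wedges e_J with 0 ∈ J. -/
def projPlus {d k : ℕ} (v : Lam (d+1) k) : Lam (d+1) k :=
  fun J => if (0 : Fin (d+1)) ∈ J.1 then v J else 0

/-- The projection π₋ of Λ^k ℝ^{d+1} onto the span of the wedges e_J with 0 ∉ J. -/
def projMinus {d k : ℕ} (v : Lam (d+1) k) : Lam (d+1) k :=
  fun J => if (0 : Fin (d+1)) ∉ J.1 then v J else 0

/-! ## The homogeneous space X = SL_{n+1}(ℝ)/SL_{n+1}(ℤ) -/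

noncomputable instance SLtop (m : ℕ) : TopologicalSpace (Matrix.SpecialLinearGroup (Fin m) ℝ) :=
  TopologicalSpace.induced (fun g => (g : Matrix (Fin m) (Fin m) ℝ)) inferInstance

abbrev SLn (m : ℕ) := Matrix.SpecialLinearGroup (Fin m) ℝ

/-- Γ = SL_m(ℤ) viewed as a subgroup of SL_m(ℝ). -/
def Gamma (m : ℕ) : Subgroup (SLn m) :=
  (Matrix.SpecialLinearGroup.map (n := Fin m) (Int.castRingHom ℝ)).range

/-- The space X = SL_m(ℝ)/SL_m(ℤ). -/
abbrev Xsp (m : ℕ) := SLn m ⧸ Gamma m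

/-! ## Matrices and one-parameter subgroups -/

lemma det_upperTri {m : ℕ} (M : Matrix (Fin m) (Fin m) ℝ)
    (hoff : ∀ i j : Fin m, (j : ℕ) < (i : ℕ) → M i j = 0)
    (hdiag : ∀ i, M i i = 1) : M.det = 1 := by
  have hbt : M.BlockTriangular id := fun i j hij => hoff i j hij
  rw [Matrix.det_of_upperTriangular hbt]
  simp [hdiag]

/-- u(s): the identity matrix with s₁,…,s_d placed in the first row (columns 1,…,d). -/
def uMat (n d : ℕ) (s : Fin d → ℝ) : Matrix (Fin (n+1)) (Fin (n+1)) ℝ :=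
  Matrix.of fun i j =>
    if i = j then 1
    else if h : i = 0 ∧ 1 ≤ (j : ℕ) ∧ (j : ℕ) ≤ d then s ⟨(j : ℕ) - 1, by omega⟩ else 0

/-- u(s) as an element of SL_{n+1}(ℝ). -/
def uSL (n d : ℕ) (s : Fin d → ℝ) : SLn (n+1) :=
  ⟨uMat n d s, det_upperTri _ (fun i j hij => by
      simp only [uMat, Matrix.of_apply]
      rw [if_neg (by rintro rfl; omega), dif_neg (by rintro ⟨rfl, h1, h2⟩; simp at hij)])
    (fun i => by simp [uMat])⟩

/-- u(x): the identity matrix with x ∈ ℝ^n placed in the first row. -/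
def uxMat (n : ℕ) (x : Fin n → ℝ) : Matrix (Fin (n+1)) (Fin (n+1)) ℝ :=
  Matrix.of fun i j =>
    if i = j then 1
    else if h : i = 0 ∧ 1 ≤ (j : ℕ) then x ⟨(j : ℕ) - 1, by have := j.isLt; omega⟩ else 0

/-- u(x) as an element of SL_{n+1}(ℝ). -/
def uxSL (n : ℕ) (x : Fin n → ℝ) : SLn (n+1) :=
  ⟨uxMat n x, det_upperTri _ (fun i j hij => by
      simp only [uxMat, Matrix.of_apply]
      rw [if_neg (by rintro rfl; omega), dif_neg (by rintro ⟨rfl, h1⟩; simp at hij)])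
    (fun i => by simp [uxMat])⟩

/-- u_A: the block unipotent matrix with I_{d+1}, I_{n−d} on the diagonal and A in the
upper-right block. -/
def uAMat (n d : ℕ) (A : Matrix (Fin (d+1)) (Fin (n-d)) ℝ) : Matrix (Fin (n+1)) (Fin (n+1)) ℝ :=
  Matrix.of fun i j =>
    if i = j then 1
    else if h : (i : ℕ) ≤ d ∧ d + 1 ≤ (j : ℕ) then
      A ⟨(i : ℕ), by omega⟩ ⟨(j : ℕ) - (d+1), by have := j.isLt; omega⟩ else 0

/-- u_A as an element of SL_{n+1}(ℝ). -/
def uASL (n d : ℕ) (A : Matrix (Fin (d+1)) (Fin (n-d)) ℝ) : SLn (n+1) :=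
  ⟨uAMat n d A, det_upperTri _ (fun i j hij => by
      simp only [uAMat, Matrix.of_apply]
      rw [if_neg (by rintro rfl; omega), dif_neg (by rintro ⟨h1, h2⟩; omega)])
    (fun i => by simp [uAMat])⟩

lemma sum_ite_fin (m k : ℕ) (hk : k ≤ m) (a b : ℝ) :
    (∑ i : Fin m, if (i : ℕ) < k then a else b) = k * a + ((m - k : ℕ) : ℝ) * b := by
  rw [Fin.sum_univ_eq_sum_range (fun i => if i < k then a else b) m]
  rw [Finset.range_eq_Ico, ← Finset.sum_Ico_consecutive _ (Nat.zero_le k) hk]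
  rw [Finset.sum_congr rfl (fun i hi => if_pos (Finset.mem_Ico.mp hi).2),
    Finset.sum_congr rfl (g := fun _ => b)
      (fun i hi => if_neg (Nat.not_lt.mpr (Finset.mem_Ico.mp hi).1))]
  simp [Nat.card_Ico, mul_comm]

/-- A diagonal matrix with entries exp (f i), as an element of SL_m(ℝ). -/
def diagSL (m : ℕ) (f : Fin m → ℝ) (h : ∑ i, f i = 0) : SLn m :=
  ⟨Matrix.diagonal fun i => Real.exp (f i), by
    rw [Matrix.det_diagonal, ← Real.exp_sum, h, Real.exp_zero]⟩

/-- b_t = diag(e^{(n−d)t/((d+1)(n+1))}·I_{d+1}, e^{−t/(n+1)}·I_{n−d}) ∈ SL_{n+1}(ℝ). -/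
def btSL (n d : ℕ) (h : d ≤ n) (t : ℝ) : SLn (n+1) :=
  diagSL (n+1)
    (fun i => if (i : ℕ) < d + 1 then ((n : ℝ) - (d : ℝ)) * t / (((d : ℝ) + 1) * ((n : ℝ) + 1))
      else -t / ((n : ℝ) + 1))
    (by
      rw [sum_ite_fin (n+1) (d+1) (by omega)]
      have h1 : ((n + 1 - (d + 1) : ℕ) : ℝ) = (n : ℝ) - (d : ℝ) := by
        have h2 : (n + 1 - (d + 1) : ℕ) = n - d := by omega
        rw [h2, Nat.cast_sub h]
      rw [h1]
      have hd1 : ((d : ℝ) + 1) ≠ 0 := by positivity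
      have hn1 : ((n : ℝ) + 1) ≠ 0 := by positivity
      field_simp
      push_cast
      ring)

/-- c_t = diag(e^{dt/(d+1)}, e^{−t/(d+1)}·I_d, I_{n−d}) ∈ SL_{n+1}(ℝ). -/
def ctSL (n d : ℕ) (h : d ≤ n) (t : ℝ) : SLn (n+1) :=
  diagSL (n+1)
    (fun i => if (i : ℕ) = 0 then (d : ℝ) * t / ((d : ℝ) + 1)
      else if (i : ℕ) < d + 1 then -t / ((d : ℝ) + 1) else 0)
    (by
      rw [Fin.sum_univ_succ]
      simp only [Fin.val_zero, if_pos rfl, Fin.val_succ]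
      have key : ∀ i : Fin n,
          (if (i : ℕ) + 1 = 0 then (d : ℝ) * t / ((d : ℝ) + 1)
            else if (i : ℕ) + 1 < d + 1 then -t / ((d : ℝ) + 1) else 0)
          = (if (i : ℕ) < d then -t / ((d : ℝ) + 1) else 0) := by
        intro i
        rw [if_neg (by omega)]
        by_cases hc : (i : ℕ) < d
        · rw [if_pos (by omega), if_pos hc]
        · rw [if_neg (by omega), if_neg hc]
      rw [Finset.sum_congr rfl fun i _ => key i, sum_ite_fin n d h]
      have hd1 : ((d : ℝ) + 1) ≠ 0 := by positivity
      simp only [if_true]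
      field_simp
      try (push_cast; ring))

/-- g_t = diag(e^{nt/(n+1)}, e^{−t/(n+1)}·I_n) ∈ SL_{n+1}(ℝ). -/
def gtSL (n : ℕ) (t : ℝ) : SLn (n+1) :=
  diagSL (n+1)
    (fun i => if (i : ℕ) = 0 then (n : ℝ) * t / ((n : ℝ) + 1) else -t / ((n : ℝ) + 1))
    (by
      rw [Fin.sum_univ_succ]
      simp only [Fin.val_zero, if_pos rfl, Fin.val_succ]
      have key : ∀ i : Fin n,
          (if (i : ℕ) + 1 = 0 then (n : ℝ) * t / ((n : ℝ) + 1) else -t / ((n : ℝ) + 1))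
          = -t / ((n : ℝ) + 1) := fun i => if_neg (by omega)
      rw [Finset.sum_congr rfl fun i _ => key i, Finset.sum_const, Finset.card_univ,
        Fintype.card_fin, nsmul_eq_mul]
      have hn1 : ((n : ℝ) + 1) ≠ 0 := by positivity
      simp only [if_true]
      field_simp
      try (push_cast; ring))

/-- c_t = diag(e^{dt/(d+1)}, e^{−t/(d+1)}·I_d) as a (d+1)×(d+1) matrix. -/
def ctMat1 (d : ℕ) (t : ℝ) : Matrix (Fin (d+1)) (Fin (d+1)) ℝ :=
  Matrix.diagonal fun i =>
    if (i : ℕ) = 0 then Real.exp ((d : ℝ) * t / ((d : ℝ) + 1))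
    else Real.exp (-t / ((d : ℝ) + 1))

/-- c_t = diag(e^{dt/(d+1)}, e^{−t/(d+1)}·I_d, I_{n−d}) as an (n+1)×(n+1) matrix. -/
def ctMatN (n d : ℕ) (t : ℝ) : Matrix (Fin (n+1)) (Fin (n+1)) ℝ :=
  Matrix.diagonal fun i =>
    if (i : ℕ) = 0 then Real.exp ((d : ℝ) * t / ((d : ℝ) + 1))
    else if (i : ℕ) < d + 1 then Real.exp (-t / ((d : ℝ) + 1)) else 1

/-- The identification Fin (n+1) ≃ Fin (d+1) ⊕ Fin (n−d). -/
def finSplit (n d : ℕ) (h : d ≤ n) : Fin (n+1) ≃ Fin (d+1) ⊕ Fin (n-d) :=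
  (finCongr (by omega)).trans finSumFinEquiv.symm

/-- The embedding SL_{d+1}(ℝ) → SL_{n+1}(ℝ), h ↦ diag(h, I_{n−d}); its image is the
subgroup H of the paper. -/
def embedSL (n d : ℕ) (h : d ≤ n) (g : Matrix.SpecialLinearGroup (Fin (d+1)) ℝ) : SLn (n+1) :=
  ⟨Matrix.reindex (finSplit n d h).symm (finSplit n d h).symm
      (Matrix.fromBlocks (g : Matrix (Fin (d+1)) (Fin (d+1)) ℝ) 0 0
        (1 : Matrix (Fin (n-d)) (Fin (n-d)) ℝ)), by
    rw [Matrix.det_reindex_self, Matrix.det_fromBlocks_zero₂₁, Matrix.det_one, mul_one]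
    exact g.2⟩

/-! ## Height functions and exponents -/

/-- The cube I^d = [−1/2, 1/2]^d. -/
def Icube (d : ℕ) : Set (Fin d → ℝ) := Set.univ.pi fun _ => Set.Icc (-(1/2) : ℝ) (1/2)

/-- The function φ_ε on Λ^k ℝ^{n+1}, with values in [0,∞] (here δ_k = (n+1−k)k). -/
def phiFn (n d k : ℕ) (ε : ℝ) (v : Lam (n+1) k) : ℝ≥0∞ :=
  if ‖proj d 0 v + proj d (d+1) v‖ < ε ^ ((n + 1 - k) * k) then
    ⨅ i ∈ Finset.Icc 1 d,
      ENNReal.ofReal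
          (ε ^ ((((d : ℝ) + 1) / (((d : ℝ) + 1) - (i : ℝ))) * (((n + 1 - k) * k : ℕ) : ℝ)))
        * ENNReal.ofReal ‖proj d i v‖ ^ (-(((d : ℝ) + 1) / (((d : ℝ) + 1) - (i : ℝ))))
  else 0

/-- v ∈ Λ^k ℝ^{n+1} is a y-integral vector: v = g(v₁ ∧ ⋯ ∧ v_k) for a representative g
of y and linearly independent integer vectors v₁,…,v_k. -/
def IsIntegralVec (n : ℕ) {k : ℕ} (y : Xsp (n+1)) (v : Lam (n+1) k) : Prop :=
  ∃ g : SLn (n+1), (QuotientGroup.mk g : Xsp (n+1)) = y ∧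
    ∃ w : Fin k → (Fin (n+1) → ℤ), LinearIndependent ℤ w ∧
      v = extPow (g : Matrix (Fin (n+1)) (Fin (n+1)) ℝ) (wedgeInt w)

/-- The Margulis height function α_ε^θ on X. -/
def alphaF (n d : ℕ) (ε θ : ℝ) (y : Xsp (n+1)) : ℝ≥0∞ :=
  ⨆ k ∈ Finset.Icc 1 n, ⨆ v : Lam (n+1) k, ⨆ _ : v ≠ 0 ∧ IsIntegralVec n y v, phiFn n d k ε v ^ θ

/-- The dynamical exponent ρ(y; b_t, α) = limsup_{t→∞} log α(b_t y) / t ∈ [−∞,∞]. -/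
def rhoExp (n d : ℕ) (h : d ≤ n) (α : Xsp (n+1) → ℝ≥0∞) (y : Xsp (n+1)) : EReal :=
  Filter.limsup (fun t : ℝ => ENNReal.log (α (btSL n d h t • y)) / (t : EReal)) Filter.atTop

/-- α̃_δ(y) = ∫₀^∞ e^{−δt} α(b_t y) dt. -/
def atilde (n d : ℕ) (h : d ≤ n) (δ : ℝ) (α : Xsp (n+1) → ℝ≥0∞) (y : Xsp (n+1)) : ℝ≥0∞ :=
  ∫⁻ t in Set.Ioi (0 : ℝ), ENNReal.ofReal (Real.exp (-δ * t)) * α (btSL n d h t • y)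

/-- α is Lipschitz with respect to the action of H = diag(SL_{d+1}(ℝ), I_{n−d}). -/
def LipschitzWrtH (n d : ℕ) (h : d ≤ n) (α : Xsp (n+1) → ℝ≥0∞) : Prop :=
  ∀ F : Set (SLn (n+1)), F ⊆ Set.range (embedSL n d h) → IsCompact F →
    ∃ C : ℝ, 1 ≤ C ∧ ∀ g ∈ F, ∀ y : Xsp (n+1), α (g • y) ≤ ENNReal.ofReal C * α y

/-- y ∈ X is g_t-divergent on average. -/
def gDivergentOnAvg (n : ℕ) (y : Xsp (n+1)) : Prop :=
  ∀ K : Set (Xsp (n+1)), IsCompact K →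
    Tendsto (fun N : ℕ => ((Set.ncard {l : ℕ | 1 ≤ l ∧ l ≤ N ∧ gtSL n l • y ∈ K} : ℝ) / N))
      atTop (nhds 0)

/-- The set B_x(M,t,m;N) of the paper (for x = y_A and the height function α̃ = α̃_δ). -/
def Bset (n d : ℕ) (h : d ≤ n) (δ : ℝ) (α : Xsp (n+1) → ℝ≥0∞) (yA : Xsp (n+1))
    (M t : ℝ) (m N : ℕ) : Set (Fin d → ℝ) :=
  {s : Fin d → ℝ | s ∈ Icube d ∧
    atilde n d h δ α ((gtSL n ((m : ℝ) * t) * uSL n d s) • yA) < ENNReal.ofReal M ∧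
    ∀ l : ℕ, 1 ≤ l → l ≤ N →
      ENNReal.ofReal M ≤ atilde n d h δ α ((gtSL n (((m : ℝ) + (l : ℝ)) * t) * uSL n d s) • yA)}

/-! ## Diophantine approximation -/

/-- x ∈ ℝ^n is a singular vector. -/
def IsSingular (n : ℕ) (x : Fin n → ℝ) : Prop :=
  ∀ ε : ℝ, 0 < ε → ∃ N₀ : ℝ, ∀ N : ℝ, N₀ ≤ N → ∃ q : Fin n → ℤ, q ≠ 0 ∧ ∃ p : ℤ,
    |(∑ i, (q i : ℝ) * x i) - (p : ℝ)| ≤ ε * N ^ (-(n : ℝ)) ∧ ‖q‖ ≤ N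

/-- The vector (s, s̃A) ∈ ℝ^n, where s̃ = (1, s₁, …, s_d). -/
def xvec (n d : ℕ) (h : d ≤ n) (A : Matrix (Fin (d+1)) (Fin (n-d)) ℝ) (s : Fin d → ℝ) :
    Fin n → ℝ :=
  fun i => Fin.append s (Matrix.vecMul (Fin.cons 1 s) A) (Fin.cast (Nat.add_sub_cancel' h).symm i)

/-- The set of exponents ω for which ‖Aq − p‖ ≤ ‖q‖^{−ω} has infinitely many solutions
q ∈ ℤ^{n−d} \ {0}, p ∈ ℤ^{d+1}. -/
def diophSet (n d : ℕ) (A : Matrix (Fin (d+1)) (Fin (n-d)) ℝ) : Set ℝ :=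
  {ω : ℝ | {qp : (Fin (n-d) → ℤ) × (Fin (d+1) → ℤ) | qp.1 ≠ 0 ∧
    ‖A.mulVec (fun i => (qp.1 i : ℝ)) - (fun i => (qp.2 i : ℝ))‖ ≤ ‖qp.1‖ ^ (-ω)}.Infinite}

/-- The Diophantine exponent ω(A) ∈ [−∞, +∞]. -/
def omegaExp (n d : ℕ) (A : Matrix (Fin (d+1)) (Fin (n-d)) ℝ) : EReal :=
  sSup (Real.toEReal '' diophSet n d A)

end

namespace ExpVec

open Finset

/-! ### finsetEmb generalities -/

lemma finsetEmb_mem {m k : ℕ} (J : Idx m k) (a : Fin k) : finsetEmb J a ∈ J.1 :=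
  (J.1.orderIsoOfFin J.2 a).2

lemma finsetEmb_injective {m k : ℕ} (J : Idx m k) : Function.Injective (finsetEmb J) :=
  fun a b h => (J.1.orderIsoOfFin J.2).injective (Subtype.ext h)

lemma finsetEmb_surj {m k : ℕ} (J : Idx m k) {x : Fin m} (hx : x ∈ J.1) :
    ∃ a, finsetEmb J a = x := by
  obtain ⟨a, ha⟩ := (J.1.orderIsoOfFin J.2).surjective ⟨x, hx⟩
  exact ⟨a, congrArg Subtype.val ha⟩

lemma finsetEmb_zero {d k : ℕ} [NeZero k] (J : Idx (d+1) k) (h0 : (0 : Fin (d+1)) ∈ J.1) :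
    finsetEmb J 0 = 0 := by
  obtain ⟨a, ha⟩ := finsetEmb_surj J h0
  have h1 : finsetEmb J 0 ≤ finsetEmb J a :=
    (J.1.orderIsoOfFin J.2).monotone (Fin.zero_le a)
  rw [ha] at h1
  exact le_antisymm h1 (Fin.zero_le _)

lemma finsetEmb_ne_zero {d k : ℕ} [NeZero k] (J : Idx (d+1) k) (h0 : (0 : Fin (d+1)) ∈ J.1)
    {a : Fin k} (ha : a ≠ 0) : finsetEmb J a ≠ 0 := by
  intro h
  exact ha (finsetEmb_injective J (h.trans (finsetEmb_zero J h0).symm))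

/-! ### uxMat entries -/

lemma uxMat_apply_ne {n : ℕ} (x : Fin n → ℝ) {p : Fin (n+1)} (hp : p ≠ 0) (j : Fin (n+1)) :
    uxMat n x p j = if p = j then 1 else 0 := by
  simp only [uxMat, Matrix.of_apply]
  by_cases h : p = j
  · simp [h]
  · rw [if_neg h, if_neg h, dif_neg]
    rintro ⟨rfl, -⟩; exact hp rfl

lemma uxMat_zero_zero {n : ℕ} (x : Fin n → ℝ) : uxMat n x 0 0 = 1 := by
  simp [uxMat]

lemma uxMat_zero_ne {n : ℕ} (x : Fin n → ℝ) {j : Fin (n+1)} (hj : j ≠ 0) :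
    uxMat n x 0 j = x ⟨(j : ℕ) - 1, by have := j.isLt; omega⟩ := by
  simp only [uxMat, Matrix.of_apply]
  rw [if_neg (fun h => hj h.symm), dif_pos (by
    refine ⟨by trivial, ?_⟩
    have : (j : ℕ) ≠ 0 := fun h => hj (Fin.ext h)
    omega)]

end ExpVec


namespace ExpVec
open Finset

variable {d i : ℕ}

lemma det_sub_vanish (s : Fin d → ℝ) (K K' : Idx (d+1) i) {x : Fin (d+1)}
    (hxK : x ∈ K.1) (hx0 : x ≠ 0) (hxK' : x ∉ K'.1) :
    ((uxMat d s).submatrix (finsetEmb K) (finsetEmb K')).det = 0 := by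
  obtain ⟨a, ha⟩ := finsetEmb_surj K hxK
  apply Matrix.det_eq_zero_of_row_eq_zero a
  intro q
  simp only [Matrix.submatrix_apply, ha]
  rw [uxMat_apply_ne s hx0, if_neg]
  intro h; exact hxK' (h ▸ finsetEmb_mem K' q)

lemma det_sub_self [NeZero i] (s : Fin d → ℝ) (K : Idx (d+1) i) (h0 : (0:Fin (d+1)) ∈ K.1) :
    ((uxMat d s).submatrix (finsetEmb K) (finsetEmb K)).det = 1 := by
  apply det_upperTri
  · intro p q hpq
    have hp : p ≠ 0 := by
      intro h; subst h; simp at hpq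
    simp only [Matrix.submatrix_apply]
    rw [uxMat_apply_ne s (finsetEmb_ne_zero K h0 hp), if_neg]
    intro h
    have := finsetEmb_injective K h
    omega
  · intro p
    by_cases hp : p = 0
    · subst hp
      simp only [Matrix.submatrix_apply, finsetEmb_zero K h0]
      exact uxMat_zero_zero s
    · simp only [Matrix.submatrix_apply]
      rw [uxMat_apply_ne s (finsetEmb_ne_zero K h0 hp), if_pos rfl]

lemma abs_det_sub_le (s : Fin d → ℝ) (hs : ∀ j, |s j| ≤ 1/2) (K K' : Idx (d+1) i) :
    |((uxMat d s).submatrix (finsetEmb K) (finsetEmb K')).det| ≤ (Nat.factorial i : ℝ) := by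
  have h1 : ∀ p q, |((uxMat d s).submatrix (finsetEmb K) (finsetEmb K')) p q| ≤ 1 := by
    intro p q
    simp only [Matrix.submatrix_apply]
    by_cases hp : finsetEmb K p = 0
    · rw [hp]
      by_cases hq : finsetEmb K' q = 0
      · rw [hq, uxMat_zero_zero]; norm_num
      · rw [uxMat_zero_ne s hq]
        exact (hs _).trans (by norm_num)
    · rw [uxMat_apply_ne s hp]
      split <;> norm_num
  have h2 := Matrix.det_le (A := (uxMat d s).submatrix (finsetEmb K) (finsetEmb K'))
      (abv := AbsoluteValue.abs) (x := 1) h1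
  simpa using h2

lemma extPow_diag_mul {m k : ℕ} (dv : Fin m → ℝ) (U : Matrix (Fin m) (Fin m) ℝ)
    (v : Lam m k) (K : Idx m k) :
    extPow (Matrix.diagonal dv * U) v K = (∏ a, dv (finsetEmb K a)) * extPow U v K := by
  unfold extPow
  rw [Finset.mul_sum]
  refine Finset.sum_congr rfl fun K' _ => ?_
  have hsub : (Matrix.diagonal dv * U).submatrix (finsetEmb K) (finsetEmb K')
      = Matrix.diagonal (fun p => dv (finsetEmb K p)) *
          U.submatrix (finsetEmb K) (finsetEmb K') := by
    ext p q
    simp [Matrix.submatrix_apply, Matrix.diagonal_mul]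
  rw [hsub, Matrix.det_mul, Matrix.det_diagonal]
  ring

lemma extPow_ct_apply [NeZero i] (t : ℝ) (s : Fin d → ℝ) (v : Lam (d+1) i)
    (K : Idx (d+1) i) (h0 : (0:Fin (d+1)) ∈ K.1) :
    extPow (ctMat1 d t * uxMat d s) v K
      = Real.exp ((((d:ℝ)+1-(i:ℝ))/((d:ℝ)+1))*t) * extPow (uxMat d s) v K := by
  rw [ctMat1, extPow_diag_mul]
  congr 1
  have h1 : (1:ℕ) ≤ i := Nat.one_le_iff_ne_zero.2 (NeZero.ne i)
  rw [← Finset.mul_prod_erase Finset.univ _ (Finset.mem_univ (0 : Fin i))]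
  have hz : finsetEmb K (0:Fin i) = 0 := finsetEmb_zero K h0
  have h2 : ∀ a ∈ Finset.univ.erase (0:Fin i),
      (if ((finsetEmb K a : Fin (d+1)) : ℕ) = 0 then Real.exp ((d:ℝ)*t/((d:ℝ)+1))
        else Real.exp (-t/((d:ℝ)+1))) = Real.exp (-t/((d:ℝ)+1)) := by
    intro a ha
    rw [if_neg]
    intro h
    exact finsetEmb_ne_zero K h0 (Finset.ne_of_mem_erase ha) (Fin.ext h)
  rw [Finset.prod_congr rfl h2, Finset.prod_const, hz]
  rw [if_pos (show ((0:Fin (d+1)):ℕ) = 0 by simp)]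
  have hcard : ((Finset.univ.erase (0:Fin i)).card : ℝ) = (i:ℝ) - 1 := by
    rw [Finset.card_erase_of_mem (Finset.mem_univ _), Finset.card_univ, Fintype.card_fin]
    rw [Nat.cast_sub h1, Nat.cast_one]
  rw [← Real.exp_nat_mul, ← Real.exp_add]
  congr 1
  rw [show (((Finset.univ.erase (0:Fin i)).card : ℝ)) * (-t/((d:ℝ)+1))
      = ((i:ℝ)-1) * (-t/((d:ℝ)+1)) by rw [hcard]]
  have hd1 : ((d:ℝ)+1) ≠ 0 := by positivity
  field_simp
  ring

end ExpVec


namespace ExpVec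
open Finset

variable {d i : ℕ}

lemma succ_val_sub_one (m : Fin d) {j : Fin (d+1)} (hj : j ≠ 0) :
    (⟨(j : ℕ) - 1, by have := j.isLt; omega⟩ : Fin d) = m ↔ j = Fin.succ m := by
  constructor
  · intro h
    have h1 : (j : ℕ) - 1 = (m : ℕ) := congrArg Fin.val h
    have h2 : (j : ℕ) ≠ 0 := fun hc => hj (Fin.ext (by simpa using hc))
    apply Fin.ext
    simp only [Fin.val_succ]
    omega
  · intro h
    subst h
    apply Fin.ext
    simp [Fin.val_succ]

lemma extPow_update_mem [NeZero i] (s : Fin d → ℝ) (m : Fin d) (x : ℝ) (v : Lam (d+1) i)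
    (K : Idx (d+1) i) (h0 : (0:Fin (d+1)) ∈ K.1) (hm : Fin.succ m ∈ K.1) :
    extPow (uxMat d (Function.update s m x)) v K = extPow (uxMat d s) v K := by
  unfold extPow
  refine Finset.sum_congr rfl fun K' _ => ?_
  congr 1
  obtain ⟨a₀, ha₀⟩ := finsetEmb_surj K hm
  have ha₀0 : a₀ ≠ 0 := by
    intro h
    rw [h, finsetEmb_zero K h0] at ha₀
    exact (Fin.succ_ne_zero m) ha₀.symm
  set M := (uxMat d s).submatrix (finsetEmb K) (finsetEmb K') with hM
  have key : (uxMat d (Function.update s m x)).submatrix (finsetEmb K) (finsetEmb K')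
      = M.updateRow 0 (M 0 + (x - s m) • M a₀) := by
    ext p q
    by_cases hp : p = 0
    · subst hp
      rw [Matrix.updateRow_self]
      simp only [Pi.add_apply, Pi.smul_apply, smul_eq_mul, hM, Matrix.submatrix_apply,
        finsetEmb_zero K h0, ha₀]
      by_cases hq : finsetEmb K' q = 0
      · rw [hq, uxMat_zero_zero, uxMat_zero_zero, uxMat_apply_ne s (Fin.succ_ne_zero m),
          if_neg (fun h => (Fin.succ_ne_zero m) (h.trans rfl)), mul_zero, add_zero]
      · rw [uxMat_zero_ne _ hq, uxMat_zero_ne _ hq, uxMat_apply_ne s (Fin.succ_ne_zero m)]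
        by_cases hqm : finsetEmb K' q = Fin.succ m
        · rw [if_pos hqm.symm]
          rw [show (⟨((finsetEmb K' q) : ℕ) - 1, by have := (finsetEmb K' q).isLt; omega⟩ : Fin d)
              = m from (succ_val_sub_one m hq).2 hqm]
          rw [Function.update_self]
          ring
        · rw [if_neg (fun h => hqm h.symm), mul_zero, add_zero, Function.update_of_ne]
          intro h
          exact hqm ((succ_val_sub_one m hq).1 h)
    · rw [Matrix.updateRow_ne hp]
      simp only [hM, Matrix.submatrix_apply]
      rw [uxMat_apply_ne _ (finsetEmb_ne_zero K h0 hp),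
        uxMat_apply_ne _ (finsetEmb_ne_zero K h0 hp)]
  rw [key, Matrix.det_updateRow_add_smul_self M (Ne.symm ha₀0)]

lemma extPow_slope [NeZero i] (v : Lam (d+1) i) (J₀ : Idx (d+1) i)
    (h0 : (0:Fin (d+1)) ∉ J₀.1) (m : Fin d) (hm : Fin.succ m ∈ J₀.1)
    (K : Idx (d+1) i) (hK : K.1 = insert 0 (J₀.1.erase (Fin.succ m))) :
    ∃ c : ℝ, |c| = |v J₀| ∧ ∀ (s : Fin d → ℝ) (x : ℝ),
      extPow (uxMat d (Function.update s m x)) v K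
        = extPow (uxMat d (Function.update s m 0)) v K + x * c := by
  classical
  have h0K : (0:Fin (d+1)) ∈ K.1 := by rw [hK]; exact Finset.mem_insert_self _ _
  have hmK : Fin.succ m ∉ K.1 := by
    rw [hK]
    intro h
    rcases Finset.mem_insert.1 h with h | h
    · exact (Fin.succ_ne_zero m) h
    · exact (Finset.notMem_erase _ _) h
  set φ : Fin i → Fin (d+1) := fun p => if p = 0 then Fin.succ m else finsetEmb K p with hφ
  have hφJ : ∀ p, φ p ∈ J₀.1 := by
    intro p
    by_cases hp : p = 0
    · simp [hφ, hp, hm]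
    · simp only [hφ, if_neg hp]
      have h1 : finsetEmb K p ∈ K.1 := finsetEmb_mem K p
      rw [hK] at h1
      rcases Finset.mem_insert.1 h1 with h | h
      · exact absurd h (finsetEmb_ne_zero K h0K hp)
      · exact Finset.mem_of_mem_erase h
  have hφinj : Function.Injective φ := by
    intro p p' h
    by_cases hp : p = 0 <;> by_cases hp' : p' = 0
    · rw [hp, hp']
    · exfalso
      simp only [hφ, if_pos hp, if_neg hp'] at h
      have h1 : finsetEmb K p' ∈ K.1 := finsetEmb_mem K p'
      rw [← h] at h1
      exact hmK h1
    · exfalso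
      simp only [hφ, if_neg hp, if_pos hp'] at h
      have h1 : finsetEmb K p ∈ K.1 := finsetEmb_mem K p
      rw [h] at h1
      exact hmK h1
    · simp only [hφ, if_neg hp, if_neg hp'] at h
      exact finsetEmb_injective K h
  set R : Idx (d+1) i → Matrix (Fin i) (Fin i) ℝ :=
    fun K' => Matrix.of fun p q => if φ p = finsetEmb K' q then 1 else 0 with hR
  -- determinant of R J₀ has absolute value 1
  have habs : |(R J₀).det| = 1 := by
    have hsurj : ∀ p, ∃ q, finsetEmb J₀ q = φ p := fun p => finsetEmb_surj J₀ (hφJ p)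
    choose ψ hψ using hsurj
    have hψinj : Function.Injective ψ := by
      intro p p' h
      apply hφinj
      rw [← hψ p, ← hψ p', h]
    have hψbij := Finite.injective_iff_bijective.1 hψinj
    let σ : Equiv.Perm (Fin i) := Equiv.ofBijective ψ hψbij
    have hRp : R J₀ = σ.permMatrix ℝ := by
      ext p q
      simp only [hR, Matrix.of_apply, Equiv.Perm.permMatrix, PEquiv.toMatrix_apply,
        Equiv.toPEquiv_apply, Option.mem_def, Option.some.injEq]
      have : φ p = finsetEmb J₀ q ↔ σ p = q := by
        rw [← hψ p]
        constructor
        · intro h; exact finsetEmb_injective J₀ h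
        · intro h; rw [show σ p = ψ p from rfl] at h; rw [h]
      by_cases h : φ p = finsetEmb J₀ q
      · rw [if_pos h, if_pos (this.1 h)]
      · rw [if_neg h, if_neg (fun hc => h (this.2 hc))]
    rw [hRp, Matrix.det_permutation]
    rcases Int.units_eq_one_or (Equiv.Perm.sign σ) with h | h <;> rw [h] <;> norm_num
  -- vanishing of det (R K') for K' ≠ J₀
  have hvan : ∀ K' : Idx (d+1) i, K' ≠ J₀ → (R K').det = 0 := by
    intro K' hne
    have hsub : ¬ (K'.1 ⊆ J₀.1) := by
      intro hsubset
      exact hne (Subtype.ext (Finset.eq_of_subset_of_card_le hsubset (by rw [K'.2, J₀.2])))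
    obtain ⟨y, hy1, hy2⟩ := Finset.not_subset.1 hsub
    obtain ⟨q, hq⟩ := finsetEmb_surj K' hy1
    apply Matrix.det_eq_zero_of_column_eq_zero q
    intro p
    simp only [hR, Matrix.of_apply]
    rw [if_neg]
    intro h
    rw [hq] at h
    exact hy2 (h ▸ hφJ p)
  refine ⟨(R J₀).det * v J₀, by rw [abs_mul, habs, one_mul], ?_⟩
  intro s x
  -- decompose each minor
  have hdec : ∀ K' : Idx (d+1) i,
      ((uxMat d (Function.update s m x)).submatrix (finsetEmb K) (finsetEmb K')).det
        = ((uxMat d (Function.update s m 0)).submatrix (finsetEmb K) (finsetEmb K')).det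
          + x * (R K').det := by
    intro K'
    set M₀ := (uxMat d (Function.update s m 0)).submatrix (finsetEmb K) (finsetEmb K') with hM₀
    have hrow : M₀.updateRow 0 (R K' 0) = R K' := by
      ext p q
      by_cases hp : p = 0
      · subst hp; rw [Matrix.updateRow_self]
      · rw [Matrix.updateRow_ne hp]
        simp only [hM₀, Matrix.submatrix_apply, hR, Matrix.of_apply, hφ, if_neg hp]
        rw [uxMat_apply_ne _ (finsetEmb_ne_zero K h0K hp)]
    have key : (uxMat d (Function.update s m x)).submatrix (finsetEmb K) (finsetEmb K')
        = M₀.updateRow 0 (M₀ 0 + x • (R K') 0) := by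
      ext p q
      by_cases hp : p = 0
      · subst hp
        rw [Matrix.updateRow_self]
        have hφ0 : φ 0 = Fin.succ m := by simp [hφ]
        have hR0 : ∀ q' : Fin i, R K' 0 q' = if Fin.succ m = finsetEmb K' q' then 1 else 0 := by
          intro q'
          show (if φ 0 = finsetEmb K' q' then (1:ℝ) else 0) = _
          rw [hφ0]
        simp only [Pi.add_apply, Pi.smul_apply, smul_eq_mul, hM₀, Matrix.submatrix_apply,
          finsetEmb_zero K h0K, hR0]
        by_cases hq : finsetEmb K' q = 0
        · rw [hq, uxMat_zero_zero, uxMat_zero_zero,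
            if_neg (fun h => (Fin.succ_ne_zero m) h), mul_zero, add_zero]
        · rw [uxMat_zero_ne _ hq, uxMat_zero_ne _ hq]
          by_cases hqm : finsetEmb K' q = Fin.succ m
          · rw [if_pos hqm.symm]
            rw [show (⟨((finsetEmb K' q) : ℕ) - 1, by have := (finsetEmb K' q).isLt; omega⟩ : Fin d)
                = m from (succ_val_sub_one m hq).2 hqm]
            rw [Function.update_self, Function.update_self]
            ring
          · rw [if_neg (fun h => hqm h.symm), mul_zero, add_zero,
              Function.update_of_ne, Function.update_of_ne]
            · intro h; exact hqm ((succ_val_sub_one m hq).1 h)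
            · intro h; exact hqm ((succ_val_sub_one m hq).1 h)
      · rw [Matrix.updateRow_ne hp]
        simp only [hM₀, Matrix.submatrix_apply]
        rw [uxMat_apply_ne _ (finsetEmb_ne_zero K h0K hp),
          uxMat_apply_ne _ (finsetEmb_ne_zero K h0K hp)]
    rw [key, Matrix.det_updateRow_add, Matrix.det_updateRow_smul, Matrix.updateRow_eq_self,
      hrow]
  unfold extPow
  rw [Finset.sum_congr rfl (fun K' _ => by rw [hdec K', add_mul]), Finset.sum_add_distrib]
  congr 1
  rw [Finset.sum_eq_single J₀ (fun K' _ hne => by rw [hvan K' hne]; ring)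
      (fun h => absurd (Finset.mem_univ J₀) h)]
  ring

end ExpVec


namespace ExpVec
open Finset MeasureTheory

lemma update_invariant_ext {ι α : Type*} [DecidableEq ι] (h : (ι → ℝ) → α) (S : Finset ι) :
    (∀ m ∈ S, ∀ s x, h (Function.update s m x) = h s) →
    ∀ s s' : ι → ℝ, (∀ m, m ∉ S → s m = s' m) → h s = h s' := by
  induction S using Finset.induction_on with
  | empty =>
    intro _ s s' hss
    have : s = s' := funext fun m => hss m (Finset.notMem_empty m)
    rw [this]
  | @insert a S ha ih =>
    intro hinv s s' hss
    have h1 : h s = h (Function.update s a (s' a)) :=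
      (hinv a (Finset.mem_insert_self a S) s (s' a)).symm
    rw [h1]
    refine ih (fun m hm => hinv m (Finset.mem_insert_of_mem hm)) _ _ ?_
    intro m hm
    by_cases hma : m = a
    · subst hma; rw [Function.update_self]
    · rw [Function.update_of_ne hma]
      exact hss m (by simp [hma, hm])

lemma prod_fubini {d : ℕ} (ν : Measure ℝ) [IsProbabilityMeasure ν]
    (T : Finset (Fin d)) (g : Fin d → (Fin d → ℝ) → ℝ≥0∞) (B : ℝ≥0∞) (hB : B ≠ ⊤)
    (hmeas : ∀ j, Measurable (g j))
    (hdep : ∀ j ∈ T, ∀ s s' : Fin d → ℝ, s j = s' j → (∀ m, m ∉ T → s m = s' m) → g j s = g j s')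
    (hint : ∀ j ∈ T, ∀ s : Fin d → ℝ, ∫⁻ x, g j (Function.update s j x) ∂ν ≤ B) :
    ∫⁻ s, ∏ j ∈ T, g j s ∂(Measure.pi fun _ : Fin d => ν) ≤ B ^ T.card := by
  classical
  have key : ∀ T' : Finset (Fin d), T' ⊆ T → ∀ s : Fin d → ℝ,
      (∫⋯∫⁻_T', (fun s => ∏ j ∈ T', g j s) ∂(fun _ => ν)) s ≤ B ^ T'.card := by
    intro T'
    induction T' using Finset.induction_on with
    | empty =>
      intro _ s
      simp [lmarginal_empty]
    | @insert a T'' ha ih =>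
      intro hsub s
      have haT : a ∈ T := hsub (Finset.mem_insert_self _ _)
      have hsub' : T'' ⊆ T := fun m hm => hsub (Finset.mem_insert_of_mem hm)
      have hfmeas : Measurable (fun s => ∏ j ∈ insert a T'', g j s) :=
        Finset.measurable_prod _ (fun j _ => hmeas j)
      rw [lmarginal_insert _ hfmeas ha]
      -- pull g a out of the inner marginal
      have hpull : ∀ y : Fin d → ℝ,
          (∫⋯∫⁻_T'', (fun s => ∏ j ∈ insert a T'', g j s) ∂(fun _ => ν)) y
            = g a y * (∫⋯∫⁻_T'', (fun s => ∏ j ∈ T'', g j s) ∂(fun _ => ν)) y := by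
        intro y
        show (∫⁻ z, (∏ j ∈ insert a T'', g j (Function.updateFinset y T'' z))
              ∂(Measure.pi fun _ : T'' => ν))
            = g a y * ∫⁻ z, (∏ j ∈ T'', g j (Function.updateFinset y T'' z))
              ∂(Measure.pi fun _ : T'' => ν)
        have hga : ∀ z : (j : T'') → ℝ, g a (Function.updateFinset y T'' z) = g a y := by
          intro z
          refine hdep a haT _ _ ?_ ?_
          · simp only [Function.updateFinset_def]
            rw [dif_neg ha]
          · intro m hm
            simp only [Function.updateFinset_def]
            rw [dif_neg (fun hc => hm (hsub' hc))]
        calc (∫⁻ z, (∏ j ∈ insert a T'', g j (Function.updateFinset y T'' z))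
              ∂(Measure.pi fun _ : T'' => ν))
            = ∫⁻ z, g a y * (∏ j ∈ T'', g j (Function.updateFinset y T'' z))
              ∂(Measure.pi fun _ : T'' => ν) := by
              refine lintegral_congr fun z => ?_
              rw [Finset.prod_insert ha, hga z]
          _ = g a y * ∫⁻ z, (∏ j ∈ T'', g j (Function.updateFinset y T'' z))
              ∂(Measure.pi fun _ : T'' => ν) := by
              refine lintegral_const_mul _ ?_
              exact (Finset.measurable_prod _ fun j _ => hmeas j).comp
                measurable_updateFinset
      calc (∫⁻ x, (∫⋯∫⁻_T'', (fun s => ∏ j ∈ insert a T'', g j s) ∂(fun _ => ν))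
              (Function.update s a x) ∂ν)
          = ∫⁻ x, g a (Function.update s a x) *
              (∫⋯∫⁻_T'', (fun s => ∏ j ∈ T'', g j s) ∂(fun _ => ν)) (Function.update s a x) ∂ν := by
            exact lintegral_congr fun x => hpull _
        _ ≤ ∫⁻ x, g a (Function.update s a x) * B ^ T''.card ∂ν := by
            refine lintegral_mono fun x => ?_
            exact mul_le_mul_right (ih hsub' _) _
        _ = (∫⁻ x, g a (Function.update s a x) ∂ν) * B ^ T''.card := by
            refine lintegral_mul_const' _ _ ?_
            exact ENNReal.pow_ne_top hB
        _ ≤ B * B ^ T''.card := mul_le_mul_left (hint a haT s) _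
        _ = B ^ (insert a T'').card := by
            rw [Finset.card_insert_of_notMem ha, pow_succ, mul_comm]
  have h1 : ∫⁻ s, ∏ j ∈ T, g j s ∂(Measure.pi fun _ : Fin d => ν)
      = (∫⋯∫⁻_Finset.univ, (fun s => ∏ j ∈ T, g j s) ∂(fun _ => ν)) (fun _ => 0) :=
    lintegral_eq_lmarginal_univ _
  rw [h1, ← Finset.union_sdiff_of_subset (Finset.subset_univ T),
    lmarginal_union' _ _ (Finset.measurable_prod _ (fun j _ => hmeas j))
      Finset.disjoint_sdiff]
  have h2 : (∫⋯∫⁻_T, (fun s => ∏ j ∈ T, g j s) ∂(fun _ => ν)) ≤ fun _ => B ^ T.card :=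
    fun y => key T (le_refl _) y
  calc (∫⋯∫⁻_Finset.univ \ T, (∫⋯∫⁻_T, (fun s => ∏ j ∈ T, g j s) ∂(fun _ => ν))
          ∂(fun _ => ν)) (fun _ => 0)
      ≤ (∫⋯∫⁻_Finset.univ \ T, (fun _ => B ^ T.card) ∂(fun _ => ν)) (fun _ => 0) :=
        lmarginal_mono h2 _
    _ = B ^ T.card := by
        show (∫⁻ _, B ^ T.card ∂(Measure.pi fun _ : (Finset.univ \ T : Finset (Fin d)) => ν))
            = B ^ T.card
        rw [lintegral_const]
        simp
end ExpVec


namespace ExpVec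
open Finset MeasureTheory

lemma rpow_neg_le_rpow_neg {a b : ℝ≥0∞} (h : a ≤ b) {γ : ℝ} (hγ : 0 ≤ γ) :
    b ^ (-γ) ≤ a ^ (-γ) := by
  rw [ENNReal.rpow_neg, ENNReal.rpow_neg]
  exact ENNReal.inv_le_inv.2 (ENNReal.rpow_le_rpow h hγ)

lemma rpow_neg_ne_top {a : ℝ≥0∞} (ha : a ≠ 0) {γ : ℝ} (hγ : 0 ≤ γ) : a ^ (-γ) ≠ ⊤ := by
  rw [ENNReal.rpow_neg]
  exact ENNReal.inv_ne_top.2 (ENNReal.rpow_pos_of_nonneg (pos_iff_ne_zero.2 ha) hγ).ne'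

lemma lintegral_abs_rpow_neg_Ioc {β : ℝ} (hβ0 : 0 < β) (hβ1 : β < 1) :
    ∫⁻ y in Set.Ioc (0:ℝ) (1/2), (ENNReal.ofReal |y|) ^ (-β) < ⊤ := by
  have hcong : ∫⁻ y in Set.Ioc (0:ℝ) (1/2), (ENNReal.ofReal |y|) ^ (-β)
      = ∫⁻ y in Set.Ioc (0:ℝ) (1/2), ENNReal.ofReal (y ^ (-β)) := by
    refine setLIntegral_congr_fun measurableSet_Ioc ?_
    intro y hy
    beta_reduce
    rw [abs_of_pos hy.1, ENNReal.ofReal_rpow_of_pos hy.1]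
  rw [hcong]
  have hint : IntervalIntegrable (fun y : ℝ => y ^ (-β)) volume 0 (1/2) :=
    intervalIntegral.intervalIntegrable_rpow' (by linarith)
  have hio : MeasureTheory.IntegrableOn (fun y : ℝ => y ^ (-β)) (Set.Ioc (0:ℝ) (1/2)) volume := by
    have := intervalIntegrable_iff.1 hint
    rwa [Set.uIoc_of_le (by norm_num : (0:ℝ) ≤ 1/2)] at this
  exact hio.lintegral_lt_top

lemma lintegral_abs_rpow_neg_sym {β : ℝ} (hβ0 : 0 < β) (hβ1 : β < 1) :
    ∫⁻ y in Set.Icc (-(1/2):ℝ) (1/2), (ENNReal.ofReal |y|) ^ (-β) < ⊤ := by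
  set g : ℝ → ℝ≥0∞ := fun y => (ENNReal.ofReal |y|) ^ (-β) with hg
  have hIcc : ∫⁻ y in Set.Icc (0:ℝ) (1/2), g y < ⊤ := by
    rw [← setLIntegral_congr (Ioc_ae_eq_Icc (μ := volume) (a := (0:ℝ)) (b := 1/2))]
    exact lintegral_abs_rpow_neg_Ioc hβ0 hβ1
  have hneg : ∫⁻ y in Set.Icc (-(1/2):ℝ) 0, g y < ⊤ := by
    have hpre : (Neg.neg : ℝ → ℝ) ⁻¹' (Set.Icc (-(1/2):ℝ) 0) = Set.Icc (0:ℝ) (1/2) := by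
      ext x
      simp only [Set.mem_preimage, Set.mem_Icc]
      constructor <;> intro h <;> constructor <;> linarith [h.1, h.2]
    have heq : ∫⁻ x in Set.Icc (0:ℝ) (1/2), g (-x) = ∫⁻ y in Set.Icc (-(1/2):ℝ) 0, g y := by
      rw [← hpre]
      exact (Measure.measurePreserving_neg volume).setLIntegral_comp_preimage_emb
        (MeasurableEquiv.neg ℝ).measurableEmbedding _ _
    have hgg : ∀ x : ℝ, g (-x) = g x := by intro x; simp [hg, abs_neg]
    rw [← heq]
    simp_rw [hgg]
    exact hIcc
  have hsub : Set.Icc (-(1/2):ℝ) (1/2) ⊆ Set.Icc (-(1/2):ℝ) 0 ∪ Set.Icc (0:ℝ) (1/2) := by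
    intro x hx
    rcases le_total x 0 with h | h
    · exact Set.mem_union_left _ ⟨hx.1, h⟩
    · exact Set.mem_union_right _ ⟨h, hx.2⟩
  calc ∫⁻ y in Set.Icc (-(1/2):ℝ) (1/2), g y
      ≤ ∫⁻ y in Set.Icc (-(1/2):ℝ) 0 ∪ Set.Icc (0:ℝ) (1/2), g y :=
        lintegral_mono_set hsub
    _ ≤ (∫⁻ y in Set.Icc (-(1/2):ℝ) 0, g y) + ∫⁻ y in Set.Icc (0:ℝ) (1/2), g y := by
        refine le_trans (lintegral_mono' (Measure.restrict_union_le _ _) le_rfl) ?_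
        rw [lintegral_add_measure]
    _ < ⊤ := ENNReal.add_lt_top.2 ⟨hneg, hIcc⟩

lemma lintegral_abs_translate_le {β : ℝ} (hβ0 : 0 < β) (hβ1 : β < 1) (b : ℝ) :
    ∫⁻ x in Set.Icc (-(1/2):ℝ) (1/2), (ENNReal.ofReal |x + b|) ^ (-β)
      ≤ (∫⁻ y in Set.Icc (-(1/2):ℝ) (1/2), (ENNReal.ofReal |y|) ^ (-β)) + 2 := by
  set g : ℝ → ℝ≥0∞ := fun y => (ENNReal.ofReal |y|) ^ (-β) with hg
  have hpre : (fun x : ℝ => x + b) ⁻¹' (Set.Icc (-(1/2)+b) (1/2+b)) = Set.Icc (-(1/2):ℝ) (1/2) := by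
    ext x
    simp only [Set.mem_preimage, Set.mem_Icc]
    constructor <;> intro h <;> constructor <;> linarith [h.1, h.2]
  have htrans : ∫⁻ x in Set.Icc (-(1/2):ℝ) (1/2), g (x + b)
      = ∫⁻ y in Set.Icc (-(1/2)+b) (1/2+b), g y := by
    rw [← hpre]
    exact (measurePreserving_add_right volume b).setLIntegral_comp_preimage_emb
      (MeasurableEquiv.addRight b).measurableEmbedding _ _
  show ∫⁻ x in Set.Icc (-(1/2):ℝ) (1/2), g (x + b) ≤ _
  rw [htrans]
  set S := Set.Icc (-(1/2):ℝ) (1/2)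
  set J := Set.Icc (-(1/2)+b) (1/2+b) with hJ
  have hsplit : J = (J ∩ S) ∪ (J \ S) := (Set.inter_union_diff J S).symm
  have h1 : ∫⁻ y in J ∩ S, g y ≤ ∫⁻ y in S, g y :=
    lintegral_mono_set Set.inter_subset_right
  have h2 : ∫⁻ y in J \ S, g y ≤ 2 := by
    have hpt : ∀ y ∈ J \ S, g y ≤ 2 := by
      intro y hy
      have hyS : y ∉ S := hy.2
      have habs : (1/2 : ℝ) ≤ |y| := by
        simp only [S, Set.mem_Icc, not_and_or, not_le] at hyS
        rcases hyS with h | h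
        · rw [abs_of_neg (by linarith)]; linarith
        · rw [abs_of_pos (by linarith)]; linarith
      have hb : ENNReal.ofReal (1/2 : ℝ) ≤ ENNReal.ofReal |y| := ENNReal.ofReal_le_ofReal habs
      calc g y ≤ (ENNReal.ofReal (1/2 : ℝ)) ^ (-β) := rpow_neg_le_rpow_neg hb hβ0.le
        _ = (2 : ℝ≥0∞) ^ β := by
            rw [ENNReal.rpow_neg, show ENNReal.ofReal (1/2:ℝ) = (2:ℝ≥0∞)⁻¹ by
              rw [ENNReal.ofReal_div_of_pos (by norm_num), ENNReal.ofReal_one,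
                ENNReal.ofReal_ofNat, one_div]]
            rw [← ENNReal.inv_rpow, inv_inv]
        _ ≤ (2 : ℝ≥0∞) ^ (1:ℝ) := ENNReal.rpow_le_rpow_of_exponent_le (by norm_num) hβ1.le
        _ = 2 := ENNReal.rpow_one 2
    have hJm : MeasurableSet (J \ S) := (measurableSet_Icc).diff measurableSet_Icc
    calc ∫⁻ y in J \ S, g y ≤ ∫⁻ _ in J \ S, 2 := setLIntegral_mono' hJm hpt
      _ = 2 * volume (J \ S) := setLIntegral_const _ 2
      _ ≤ 2 * volume J := mul_le_mul_right (measure_mono Set.diff_subset) 2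
      _ = 2 := by
          rw [hJ, Real.volume_Icc, show (1/2 + b - (-(1/2)+b) : ℝ) = 1 by ring]
          simp
  calc ∫⁻ y in J, g y = ∫⁻ y in (J ∩ S) ∪ (J \ S), g y := by rw [← hsplit]
    _ ≤ (∫⁻ y in J ∩ S, g y) + ∫⁻ y in J \ S, g y := by
        refine le_trans (lintegral_mono' (Measure.restrict_union_le _ _) le_rfl) ?_
        rw [lintegral_add_measure]
    _ ≤ (∫⁻ y in S, g y) + 2 := add_le_add h1 h2

lemma onedim_bound {β : ℝ} (hβ0 : 0 < β) (hβ1 : β < 1) {c : ℝ} (hc : c ≠ 0) (r : ℝ) :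
    ∫⁻ x in Set.Icc (-(1/2):ℝ) (1/2), (ENNReal.ofReal |c * x + r|) ^ (-β)
      ≤ ((∫⁻ y in Set.Icc (-(1/2):ℝ) (1/2), (ENNReal.ofReal |y|) ^ (-β)) + 2)
          * (ENNReal.ofReal |c|) ^ (-β) := by
  have hform : ∀ x : ℝ, (ENNReal.ofReal |c * x + r|) ^ (-β)
      = (ENNReal.ofReal |c|) ^ (-β) * (ENNReal.ofReal |x + r/c|) ^ (-β) := by
    intro x
    have h1 : c * x + r = c * (x + r/c) := by field_simp
    rw [h1, abs_mul, ENNReal.ofReal_mul (abs_nonneg c),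
      ENNReal.mul_rpow_of_ne_top ENNReal.ofReal_ne_top ENNReal.ofReal_ne_top]
  simp_rw [hform]
  rw [lintegral_const_mul' _ _ (rpow_neg_ne_top
    (by simpa using abs_pos.2 hc : ENNReal.ofReal |c| ≠ 0) hβ0.le)]
  rw [mul_comm]
  exact mul_le_mul_left (lintegral_abs_translate_le hβ0 hβ1 (r/c)) _

end ExpVec


namespace ExpVec
open Finset MeasureTheory

lemma volume_restrict_cube (d : ℕ) :
    (volume : Measure (Fin d → ℝ)).restrict (Icube d)
      = Measure.pi (fun _ : Fin d => volume.restrict (Set.Icc (-(1/2):ℝ) (1/2))) := by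
  refine (Measure.pi_eq ?_).symm
  intro s hs
  rw [Measure.restrict_apply (MeasurableSet.univ_pi hs), Icube, ← Set.pi_inter_distrib]
  rw [volume_pi_pi]
  exact Finset.prod_congr rfl fun j _ => (Measure.restrict_apply (hs j)).symm

instance : IsProbabilityMeasure ((volume : Measure ℝ).restrict (Set.Icc (-(1/2):ℝ) (1/2))) := by
  constructor
  rw [Measure.restrict_apply_univ, Real.volume_Icc]
  norm_num

lemma continuous_uxMat (d : ℕ) : Continuous (fun s : Fin d → ℝ => uxMat d s) := by
  refine continuous_pi fun a => continuous_pi fun b => ?_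
  show Continuous fun s : Fin d → ℝ => uxMat d s a b
  simp only [uxMat, Matrix.of_apply]
  by_cases hab : a = b
  · simp only [if_pos hab]; exact continuous_const
  · simp only [if_neg hab]
    by_cases hc : a = 0 ∧ 1 ≤ (b : ℕ)
    · simp only [dif_pos hc]; exact continuous_apply _
    · simp only [dif_neg hc]; exact continuous_const

lemma measurable_extPow_ux (d i : ℕ) (v : Lam (d+1) i) (K : Idx (d+1) i) :
    Measurable (fun s : Fin d → ℝ => extPow (uxMat d s) v K) := by
  unfold extPow
  refine Finset.measurable_sum _ (fun K' _ => Measurable.mul ?_ measurable_const)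
  have hc : Continuous (fun s : Fin d → ℝ =>
      ((uxMat d s).submatrix (finsetEmb K) (finsetEmb K')).det) := by
    exact Continuous.matrix_det
      ((continuous_uxMat d).matrix_submatrix (finsetEmb K) (finsetEmb K'))
  exact hc.measurable

end ExpVec


open ExpVec in
set_option maxHeartbeats 2000000 in
/-- Lemma 3.1: expansion of vectors in Λ^i ℝ^{d+1},
∫_{I^d} ‖c_t u(s) v‖^{−θ} ds ≤ C_θ e^{−((d+1−i)/(d+1))θt} ‖v‖^{−θ}. -/
theorem expansion_of_vectors
    (n d : ℕ) (hn : 2 ≤ n) (hd : 1 ≤ d) (hdn : d < n)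
    (i : ℕ) (hi1 : 1 ≤ i) (hid : i ≤ d) (θ : ℝ) (hθ0 : 0 < θ) (hθi : θ < (i : ℝ)) :
    ∃ C : ℝ, 0 < C ∧ ∀ t : ℝ, 0 < t → ∀ v : Lam (d+1) i, v ≠ 0 →
      (∫⁻ s in Icube d, ENNReal.ofReal ‖extPow (ctMat1 d t * uxMat d s) v‖ ^ (-θ)) ≤
        ENNReal.ofReal (C * Real.exp (-((((d : ℝ) + 1 - (i : ℝ)) / ((d : ℝ) + 1)) * θ * t)))
          * ENNReal.ofReal ‖v‖ ^ (-θ) := by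
  classical
  haveI : NeZero i := ⟨by omega⟩
  have hi0 : (0:ℝ) < (i:ℝ) := by exact_mod_cast hi1
  set β : ℝ := θ / i with hβ
  have hβ0 : 0 < β := div_pos hθ0 hi0
  have hβ1 : β < 1 := (div_lt_one hi0).2 hθi
  have hβθ : -θ = -β * (i:ℕ) := by
    rw [hβ, neg_mul, div_mul_cancel₀ θ hi0.ne']
  set KS : ℝ≥0∞ := ∫⁻ y in Set.Icc (-(1/2):ℝ) (1/2), (ENNReal.ofReal |y|) ^ (-β) with hKS
  have hKStop : KS ≠ ⊤ := (lintegral_abs_rpow_neg_sym hβ0 hβ1).ne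
  set KD : ℝ≥0∞ := KS + 2 with hKD
  have hKDtop : KD ≠ ⊤ := by
    rw [hKD]
    exact ENNReal.add_ne_top.2 ⟨hKStop, by norm_num⟩
  -- nonemptiness of the index type
  have hNE : Nonempty (Idx (d+1) i) := by
    obtain ⟨A0, -, hA0⟩ := Finset.exists_subset_card_eq (s := (Finset.univ : Finset (Fin (d+1)))) (n := i)
      (by rw [Finset.card_univ, Fintype.card_fin]; omega)
    exact ⟨⟨A0, hA0⟩⟩
  set N : ℕ := Fintype.card (Idx (d+1) i) with hN
  have hN1 : 1 ≤ N := Fintype.card_pos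
  set Cd : ℝ := N * (Nat.factorial i) with hCd
  have hCd1 : 1 ≤ Cd := by
    rw [hCd]
    have h1 : (1:ℝ) ≤ N := by exact_mod_cast hN1
    have h2 : (1:ℝ) ≤ (Nat.factorial i : ℝ) := by
      exact_mod_cast Nat.one_le_iff_ne_zero.2 (Nat.factorial_ne_zero i)
    nlinarith
  have hCd0 : 0 < Cd := by linarith
  set C : ℝ := max (2 ^ θ) ((KD.toReal) ^ i * (2*Cd) ^ θ) with hC
  have h2θpos : (0:ℝ) < 2 ^ θ := Real.rpow_pos_of_pos (by norm_num) θ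
  refine ⟨C, lt_of_lt_of_le h2θpos (le_max_left _ _), ?_⟩
  intro t ht v hv
  set lam : ℝ := ((d:ℝ) + 1 - (i:ℝ)) / ((d:ℝ) + 1) with hlam
  set E : ℝ := Real.exp (lam * t) with hE
  have hEpos : 0 < E := Real.exp_pos _
  set AE : ℝ≥0∞ := ENNReal.ofReal E with hAE
  have hAE0 : AE ≠ 0 := by
    rw [hAE]
    simpa using hEpos
  have hAEtop : AE ≠ ⊤ := ENNReal.ofReal_ne_top
  have hAEθ : AE ^ (-θ) = ENNReal.ofReal (Real.exp (-(lam * θ * t))) := by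
    rw [hAE, ENNReal.ofReal_rpow_of_pos hEpos, hE, ← Real.exp_mul]
    ring_nf
  have hnormv : 0 < ‖v‖ := norm_pos_iff.2 hv
  -- lower bound by coordinates containing 0
  have hlower : ∀ (K : Idx (d+1) i), (0 : Fin (d+1)) ∈ K.1 → ∀ s : Fin d → ℝ,
      E * |extPow (uxMat d s) v K| ≤ ‖extPow (ctMat1 d t * uxMat d s) v‖ := by
    intro K hK s
    have h1 := extPow_ct_apply (i := i) t s v K hK
    have h2 : |extPow (ctMat1 d t * uxMat d s) v K| ≤ ‖extPow (ctMat1 d t * uxMat d s) v‖ := by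
      rw [← Real.norm_eq_abs]
      exact norm_le_pi_norm _ K
    calc E * |extPow (uxMat d s) v K| = |extPow (ctMat1 d t * uxMat d s) v K| := by
          rw [h1, abs_mul, abs_of_pos hEpos, hE, hlam]
      _ ≤ _ := h2
  have hMcube : MeasurableSet (Icube d) := MeasurableSet.univ_pi (fun _ => measurableSet_Icc)
  have hvolcube : volume (Icube d) = 1 := by
    rw [Icube, volume_pi_pi]
    simp only [Real.volume_Icc]
    rw [show ((1:ℝ)/2 - -(1/2)) = 1 by norm_num, ENNReal.ofReal_one, Finset.prod_const, one_pow]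
  haveI := hNE
  by_cases hcase : ∀ K : Idx (d+1) i, (0:Fin (d+1)) ∉ K.1 → |v K| ≤ ‖v‖ / (2*Cd)
  · -- Case 1 : the norm is carried by coordinates containing 0
    obtain ⟨K₀, -, hK₀max⟩ := Finset.exists_max_image (Finset.univ : Finset (Idx (d+1) i))
      (fun K => |v K|) ⟨Classical.arbitrary _, Finset.mem_univ _⟩
    have hK₀norm : |v K₀| = ‖v‖ := by
      refine le_antisymm ?_ ?_
      · rw [← Real.norm_eq_abs]; exact norm_le_pi_norm v K₀
      · refine (pi_norm_le_iff_of_nonneg (abs_nonneg _)).2 fun K => ?_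
        rw [Real.norm_eq_abs]
        exact hK₀max K (Finset.mem_univ K)
    have h0K₀ : (0 : Fin (d+1)) ∈ K₀.1 := by
      by_contra h
      have h1 := hcase K₀ h
      rw [hK₀norm] at h1
      rw [le_div_iff₀ (by linarith)] at h1
      nlinarith
    -- pointwise lower bound on the cube
    have hpt : ∀ s ∈ Icube d, ‖v‖/2 ≤ |extPow (uxMat d s) v K₀| := by
      intro s hs
      have hscube : ∀ j, |s j| ≤ 1/2 := by
        intro j
        have := hs j (Set.mem_univ j)
        rw [Set.mem_Icc] at this
        rw [abs_le]
        exact ⟨by linarith [this.1], this.2⟩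
      have hexp : extPow (uxMat d s) v K₀
          = v K₀ + ∑ K' ∈ Finset.univ.erase K₀,
              ((uxMat d s).submatrix (finsetEmb K₀) (finsetEmb K')).det * v K' := by
        show (∑ K' : Idx (d+1) i, _) = _
        rw [← Finset.add_sum_erase _ _ (Finset.mem_univ K₀), det_sub_self s K₀ h0K₀, one_mul]
      have hterm : ∀ K' ∈ Finset.univ.erase K₀,
          |((uxMat d s).submatrix (finsetEmb K₀) (finsetEmb K')).det * v K'|
            ≤ (Nat.factorial i : ℝ) * (‖v‖ / (2*Cd)) := by
        intro K' hK'
        have hne : K' ≠ K₀ := Finset.ne_of_mem_erase hK'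
        by_cases h0K' : (0 : Fin (d+1)) ∈ K'.1
        · -- determinant vanishes
          have hnsub : ¬ (K₀.1 ⊆ K'.1) := by
            intro hsubs
            exact hne (Subtype.ext
              (Finset.eq_of_subset_of_card_le hsubs (by rw [K'.2, K₀.2])).symm)
          obtain ⟨x, hx1, hx2⟩ := Finset.not_subset.1 hnsub
          have hx0 : x ≠ 0 := fun h => hx2 (h ▸ h0K')
          rw [det_sub_vanish s K₀ K' hx1 hx0 hx2, zero_mul, abs_zero]
          positivity
        · rw [abs_mul]
          refine mul_le_mul (abs_det_sub_le s hscube K₀ K') (hcase K' h0K') (abs_nonneg _) ?_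
          positivity
      have hsum : |∑ K' ∈ Finset.univ.erase K₀,
          ((uxMat d s).submatrix (finsetEmb K₀) (finsetEmb K')).det * v K'| ≤ ‖v‖ / 2 := by
        calc |∑ K' ∈ Finset.univ.erase K₀, _| ≤ ∑ K' ∈ Finset.univ.erase K₀,
              |((uxMat d s).submatrix (finsetEmb K₀) (finsetEmb K')).det * v K'| :=
            Finset.abs_sum_le_sum_abs _ _
          _ ≤ ∑ _K' ∈ Finset.univ.erase K₀, (Nat.factorial i : ℝ) * (‖v‖ / (2*Cd)) :=
            Finset.sum_le_sum hterm
          _ = ((Finset.univ.erase K₀).card : ℝ) * ((Nat.factorial i : ℝ) * (‖v‖ / (2*Cd))) := by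
            rw [Finset.sum_const, nsmul_eq_mul]
          _ ≤ (N : ℝ) * ((Nat.factorial i : ℝ) * (‖v‖ / (2*Cd))) := by
            refine mul_le_mul_of_nonneg_right ?_ (by positivity)
            have : (Finset.univ.erase K₀).card ≤ N := by
              rw [hN, ← Finset.card_univ]
              exact Finset.card_le_card (Finset.erase_subset _ _)
            exact_mod_cast this
          _ = ‖v‖ / 2 := by
            rw [show (N:ℝ) * ((Nat.factorial i : ℝ) * (‖v‖ / (2*Cd))) = Cd * (‖v‖/(2*Cd)) by
              rw [hCd]; ring]
            field_simp
      have habs : |v K₀| - ‖v‖/2 ≤ |extPow (uxMat d s) v K₀| := by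
        rw [hexp]
        have h3 := abs_add_le (v K₀ + ∑ K' ∈ Finset.univ.erase K₀,
            ((uxMat d s).submatrix (finsetEmb K₀) (finsetEmb K')).det * v K')
          (-(∑ K' ∈ Finset.univ.erase K₀,
            ((uxMat d s).submatrix (finsetEmb K₀) (finsetEmb K')).det * v K'))
        simp only [add_neg_cancel_right, abs_neg] at h3
        linarith [hsum]
      rw [hK₀norm] at habs
      linarith
    -- integrate the constant bound
    have hptE : ∀ s ∈ Icube d,
        (ENNReal.ofReal ‖extPow (ctMat1 d t * uxMat d s) v‖) ^ (-θ)
          ≤ (ENNReal.ofReal (E * (‖v‖/2))) ^ (-θ) := by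
      intro s hs
      refine rpow_neg_le_rpow_neg (ENNReal.ofReal_le_ofReal ?_) hθ0.le
      calc E * (‖v‖/2) ≤ E * |extPow (uxMat d s) v K₀| := by
            refine mul_le_mul_of_nonneg_left (hpt s hs) hEpos.le
        _ ≤ _ := hlower K₀ h0K₀ s
    calc (∫⁻ s in Icube d, ENNReal.ofReal ‖extPow (ctMat1 d t * uxMat d s) v‖ ^ (-θ))
        ≤ ∫⁻ _s in Icube d, (ENNReal.ofReal (E * (‖v‖/2))) ^ (-θ) :=
          setLIntegral_mono' hMcube hptE
      _ = (ENNReal.ofReal (E * (‖v‖/2))) ^ (-θ) := by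
          rw [setLIntegral_const, hvolcube, mul_one]
      _ = AE ^ (-θ) * (ENNReal.ofReal (‖v‖ * (1/2))) ^ (-θ) := by
          rw [show E * (‖v‖/2) = E * (‖v‖ * (1/2)) by ring, ENNReal.ofReal_mul hEpos.le,
            ENNReal.mul_rpow_of_ne_top ENNReal.ofReal_ne_top ENNReal.ofReal_ne_top, hAE]
      _ = AE ^ (-θ) * (ENNReal.ofReal ‖v‖ ^ (-θ) * ENNReal.ofReal (2 ^ θ)) := by
          congr 1
          rw [ENNReal.ofReal_mul (norm_nonneg v),
            ENNReal.mul_rpow_of_ne_top ENNReal.ofReal_ne_top ENNReal.ofReal_ne_top]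
          rw [ENNReal.ofReal_rpow_of_pos (by norm_num : (0:ℝ) < 1/2)]
          congr 1
          rw [one_div, ← Real.rpow_neg_one 2, ← Real.rpow_mul (by norm_num : (0:ℝ) ≤ 2)]
          norm_num
      _ ≤ ENNReal.ofReal (C * Real.exp (-(lam * θ * t))) * ENNReal.ofReal ‖v‖ ^ (-θ) := by
          rw [hAEθ]
          calc ENNReal.ofReal (Real.exp (-(lam * θ * t)))
                * (ENNReal.ofReal ‖v‖ ^ (-θ) * ENNReal.ofReal (2 ^ θ))
              = (ENNReal.ofReal (Real.exp (-(lam * θ * t))) * ENNReal.ofReal (2 ^ θ))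
                * ENNReal.ofReal ‖v‖ ^ (-θ) := by ring
            _ ≤ _ := by
              refine mul_le_mul_left ?_ _
              rw [← ENNReal.ofReal_mul (Real.exp_pos _).le]
              refine ENNReal.ofReal_le_ofReal ?_
              rw [mul_comm]
              refine mul_le_mul_of_nonneg_right ?_ (Real.exp_pos _).le
              exact le_max_left _ _
  · -- Case 2 : some coordinate avoiding 0 is large
    push_neg at hcase
    obtain ⟨J₀, h0J₀, hJ₀big⟩ := hcase
    have hvJ0 : v J₀ ≠ 0 := by
      intro h
      rw [h, abs_zero] at hJ₀big
      have : 0 < ‖v‖ / (2*Cd) := by positivity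
      linarith
    set T : Finset (Fin d) := Finset.univ.filter (fun m : Fin d => Fin.succ m ∈ J₀.1) with hT
    have hmemT : ∀ m : Fin d, m ∈ T ↔ Fin.succ m ∈ J₀.1 := by
      intro m; simp [hT]
    have hTcard : T.card = i := by
      rw [← J₀.2]
      refine Finset.card_bij (fun m _ => Fin.succ m) ?_ ?_ ?_
      · intro m hm; exact (hmemT m).1 hm
      · intro a _ b _ hab; exact Fin.succ_injective _ hab
      · intro j hj
        have hj0 : j ≠ 0 := fun h => h0J₀ (h ▸ hj)
        obtain ⟨m, hm⟩ := Fin.eq_succ_of_ne_zero hj0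
        exact ⟨m, (hmemT m).2 (hm ▸ hj), hm.symm⟩
    have hKIcard : ∀ m : Fin d, Fin.succ m ∈ J₀.1 →
        (insert (0:Fin (d+1)) (J₀.1.erase (Fin.succ m))).card = i := by
      intro m hm
      rw [Finset.card_insert_of_notMem (fun h => h0J₀ (Finset.mem_of_mem_erase h)),
        Finset.card_erase_of_mem hm, J₀.2]
      omega
    set KI : Fin d → Idx (d+1) i := fun m =>
      if hm : Fin.succ m ∈ J₀.1 then ⟨insert 0 (J₀.1.erase (Fin.succ m)), hKIcard m hm⟩ else J₀
      with hKI
    have hKIval : ∀ m ∈ T, (KI m).1 = insert 0 (J₀.1.erase (Fin.succ m)) := by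
      intro m hm
      rw [hKI]
      simp only [dif_pos ((hmemT m).1 hm)]
    have h0KI : ∀ m ∈ T, (0:Fin (d+1)) ∈ (KI m).1 := by
      intro m hm; rw [hKIval m hm]; exact Finset.mem_insert_self _ _
    set g : Fin d → (Fin d → ℝ) → ℝ≥0∞ :=
      fun m s => (ENNReal.ofReal |extPow (uxMat d s) v (KI m)|) ^ (-β) with hgdef
    have hgmeas : ∀ m, Measurable (g m) := by
      intro m
      exact ((measurable_extPow_ux d i v (KI m)).abs.ennreal_ofReal).pow measurable_const
    have hrwp : ∀ a : ℝ≥0∞, a ^ (-θ) = (a ^ (-β)) ^ i := by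
      intro a
      rw [← ENNReal.rpow_natCast (a ^ (-β)) i, ← ENNReal.rpow_mul, ← hβθ]
    have hpw : ∀ s : Fin d → ℝ,
        (ENNReal.ofReal ‖extPow (ctMat1 d t * uxMat d s) v‖) ^ (-θ)
          ≤ AE ^ (-θ) * ∏ m ∈ T, g m s := by
      intro s
      calc (ENNReal.ofReal ‖extPow (ctMat1 d t * uxMat d s) v‖) ^ (-θ)
          = ∏ _m ∈ T, (ENNReal.ofReal ‖extPow (ctMat1 d t * uxMat d s) v‖) ^ (-β) := by
            rw [Finset.prod_const, hTcard, hrwp]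
        _ ≤ ∏ m ∈ T, (AE ^ (-β) * g m s) := by
            refine Finset.prod_le_prod' fun m hm => ?_
            have h1 : AE * ENNReal.ofReal |extPow (uxMat d s) v (KI m)|
                ≤ ENNReal.ofReal ‖extPow (ctMat1 d t * uxMat d s) v‖ := by
              rw [hAE, ← ENNReal.ofReal_mul hEpos.le]
              exact ENNReal.ofReal_le_ofReal (hlower (KI m) (h0KI m hm) s)
            calc (ENNReal.ofReal ‖extPow (ctMat1 d t * uxMat d s) v‖) ^ (-β)
                ≤ (AE * ENNReal.ofReal |extPow (uxMat d s) v (KI m)|) ^ (-β) :=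
                  rpow_neg_le_rpow_neg h1 hβ0.le
              _ = AE ^ (-β) * g m s := by
                  rw [ENNReal.mul_rpow_of_ne_top hAEtop ENNReal.ofReal_ne_top]
        _ = AE ^ (-θ) * ∏ m ∈ T, g m s := by
            rw [Finset.prod_mul_distrib, Finset.prod_const, hTcard, ← hrwp]
    set B : ℝ≥0∞ := KD * (ENNReal.ofReal |v J₀|) ^ (-β) with hB
    have hofv0 : ENNReal.ofReal |v J₀| ≠ 0 := by simpa using abs_pos.2 hvJ0
    have hBtop : B ≠ ⊤ := ENNReal.mul_ne_top hKDtop (rpow_neg_ne_top hofv0 hβ0.le)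
    have hdep : ∀ m ∈ T, ∀ s s' : Fin d → ℝ, s m = s' m →
        (∀ m', m' ∉ T → s m' = s' m') → g m s = g m s' := by
      intro m hm s s' h1 h2
      have hinv : ∀ m' ∈ T.erase m, ∀ (s0 : Fin d → ℝ) (x : ℝ),
          (fun s1 => extPow (uxMat d s1) v (KI m)) (Function.update s0 m' x)
            = (fun s1 => extPow (uxMat d s1) v (KI m)) s0 := by
        intro m' hm' s0 x
        refine extPow_update_mem s0 m' x v (KI m) (h0KI m hm) ?_
        rw [hKIval m hm]
        refine Finset.mem_insert_of_mem (Finset.mem_erase.2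
          ⟨?_, (hmemT m').1 (Finset.mem_of_mem_erase hm')⟩)
        exact fun h => (Finset.ne_of_mem_erase hm') (Fin.succ_injective _ h)
      have hext := update_invariant_ext (fun s1 => extPow (uxMat d s1) v (KI m))
        (T.erase m) hinv s s' ?_
      · rw [hgdef]
        simp only
        rw [hext]
      · intro m' hm'
        by_cases hmm : m' = m
        · subst hmm; exact h1
        · exact h2 m' (fun hc => hm' (Finset.mem_erase.2 ⟨hmm, hc⟩))
    have hint : ∀ m ∈ T, ∀ s : Fin d → ℝ,
        ∫⁻ x, g m (Function.update s m x)
          ∂((volume : Measure ℝ).restrict (Set.Icc (-(1/2):ℝ) (1/2))) ≤ B := by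
      intro m hm s
      obtain ⟨c, hcabs, hcslope⟩ :=
        extPow_slope v J₀ h0J₀ m ((hmemT m).1 hm) (KI m) (hKIval m hm)
      have hc0 : c ≠ 0 := by
        intro h
        rw [h, abs_zero] at hcabs
        exact hvJ0 (abs_eq_zero.1 hcabs.symm)
      have hgx : ∀ x : ℝ, g m (Function.update s m x)
          = (ENNReal.ofReal
              |c * x + extPow (uxMat d (Function.update s m 0)) v (KI m)|) ^ (-β) := by
        intro x
        rw [hgdef]
        simp only
        congr 2
        rw [hcslope s x]
        ring
      simp_rw [hgx]
      calc ∫⁻ x in Set.Icc (-(1/2):ℝ) (1/2),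
            (ENNReal.ofReal
              |c * x + extPow (uxMat d (Function.update s m 0)) v (KI m)|) ^ (-β)
          ≤ (KS + 2) * (ENNReal.ofReal |c|) ^ (-β) := onedim_bound hβ0 hβ1 hc0 _
        _ = B := by rw [hB, hKD, hcabs]
    have hmain : (∫⁻ s in Icube d, ENNReal.ofReal ‖extPow (ctMat1 d t * uxMat d s) v‖ ^ (-θ))
        ≤ AE ^ (-θ) * B ^ i := by
      calc (∫⁻ s in Icube d, ENNReal.ofReal ‖extPow (ctMat1 d t * uxMat d s) v‖ ^ (-θ))
          ≤ ∫⁻ s in Icube d, AE ^ (-θ) * ∏ m ∈ T, g m s :=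
            lintegral_mono (fun s => hpw s)
        _ = AE ^ (-θ) * ∫⁻ s in Icube d, ∏ m ∈ T, g m s :=
            lintegral_const_mul' _ _ (rpow_neg_ne_top hAE0 hθ0.le)
        _ ≤ AE ^ (-θ) * B ^ i := by
            refine mul_le_mul_right ?_ _
            calc (∫⁻ s in Icube d, ∏ m ∈ T, g m s)
                = ∫⁻ s, (∏ m ∈ T, g m s)
                  ∂(Measure.pi fun _ : Fin d =>
                    (volume : Measure ℝ).restrict (Set.Icc (-(1/2):ℝ) (1/2))) := by
                  rw [volume_restrict_cube d]
              _ ≤ B ^ T.card := prod_fubini _ T g B hBtop hgmeas hdep hint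
              _ = B ^ i := by rw [hTcard]
    refine le_trans hmain ?_
    have h4 : ENNReal.ofReal (KD.toReal ^ i) = KD ^ i := by
      rw [ENNReal.ofReal_pow ENNReal.toReal_nonneg, ENNReal.ofReal_toReal hKDtop]
    have hBpow : B ^ i
        ≤ ENNReal.ofReal (KD.toReal ^ i * (2*Cd) ^ θ) * ENNReal.ofReal ‖v‖ ^ (-θ) := by
      have h1 : B ^ i = KD ^ i * (ENNReal.ofReal |v J₀|) ^ (-θ) := by
        rw [hB, mul_pow, ← ENNReal.rpow_natCast ((ENNReal.ofReal |v J₀|) ^ (-β)) i,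
          ← ENNReal.rpow_mul, ← hβθ]
      have h2 : (ENNReal.ofReal |v J₀|) ^ (-θ)
          ≤ (ENNReal.ofReal (‖v‖ * (1/(2*Cd)))) ^ (-θ) := by
        refine rpow_neg_le_rpow_neg (ENNReal.ofReal_le_ofReal ?_) hθ0.le
        rw [show ‖v‖ * (1/(2*Cd)) = ‖v‖/(2*Cd) by ring]
        exact hJ₀big.le
      have h3 : (ENNReal.ofReal (‖v‖ * (1/(2*Cd)))) ^ (-θ)
          = ENNReal.ofReal ‖v‖ ^ (-θ) * ENNReal.ofReal ((2*Cd) ^ θ) := by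
        rw [ENNReal.ofReal_mul (norm_nonneg v),
          ENNReal.mul_rpow_of_ne_top ENNReal.ofReal_ne_top ENNReal.ofReal_ne_top]
        congr 1
        rw [ENNReal.ofReal_rpow_of_pos (by positivity)]
        congr 1
        rw [one_div, ← Real.rpow_neg_one (2*Cd), ← Real.rpow_mul (by positivity)]
        norm_num
      calc B ^ i = KD ^ i * (ENNReal.ofReal |v J₀|) ^ (-θ) := h1
        _ ≤ KD ^ i * (ENNReal.ofReal (‖v‖ * (1/(2*Cd)))) ^ (-θ) := mul_le_mul_right h2 _
        _ = ENNReal.ofReal (KD.toReal ^ i)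
            * (ENNReal.ofReal ‖v‖ ^ (-θ) * ENNReal.ofReal ((2*Cd)^θ)) := by rw [h3, h4]
        _ = ENNReal.ofReal (KD.toReal ^ i * (2*Cd) ^ θ) * ENNReal.ofReal ‖v‖ ^ (-θ) := by
            rw [ENNReal.ofReal_mul (by positivity)]
            ring
    calc AE ^ (-θ) * B ^ i
        ≤ AE ^ (-θ) * (ENNReal.ofReal (KD.toReal ^ i * (2*Cd) ^ θ)
            * ENNReal.ofReal ‖v‖ ^ (-θ)) := mul_le_mul_right hBpow _
      _ = (ENNReal.ofReal (Real.exp (-(lam * θ * t)))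
            * ENNReal.ofReal (KD.toReal ^ i * (2*Cd) ^ θ)) * ENNReal.ofReal ‖v‖ ^ (-θ) := by
          rw [hAEθ]; ring
      _ ≤ ENNReal.ofReal (C * Real.exp (-(lam * θ * t))) * ENNReal.ofReal ‖v‖ ^ (-θ) := by
          refine mul_le_mul_left ?_ _
          rw [← ENNReal.ofReal_mul (Real.exp_pos _).le]
          refine ENNReal.ofReal_le_ofReal ?_
          rw [mul_comm]
          exact mul_le_mul_of_nonneg_right (le_max_right _ _) (Real.exp_pos _).le
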